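/- arXiv:1802.05761 — 6 statements merged into one kernel-verified Lean document; each statement's English description precedes it below -/
import Mathlib

section
/- Let k ≥ 1, let W and G be symmetric real k×k matrices with G invertible, and let c₁₂ be a nonzero real constant. Then the 3k×3k block matrix Q with block rows (W, W − c₁₂·G, I), (W − c₁₂·G, W, I), (I, I, 0) is invertible, and its inverse equals the block matrix with block rows ((1/(2c₁₂))·G^{-1}, −(1/(2c₁₂))·G^{-1}, (1/2)·I), (−(1/(2c₁₂))·G^{-1}, (1/(2c₁₂))·G^{-1}, (1/2)·I), ((1/2)·I, (1/2)·I, (c₁₂/2)·G − W). In particular the coefficients k₁₁ = k₂₂ = 1/(2c₁₂), k₁₂ = k₂₁ = −1/(2c₁₂), k₁ = k₂ = 1/2 satisfy k₁₂ = k₂₁, k₁₁ + k₂₁ = k₁₂ + k₂₂ = 0 and k₁ + k₂ = 1. -/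
open Matrix

noncomputable section

/-- Block matrix built from an n×n array of k×k real blocks. -/
def blockMat (n k : ℕ) (B : Fin n → Fin n → Matrix (Fin k) (Fin k) ℝ) :
    Matrix (Fin n × Fin k) (Fin n × Fin k) ℝ :=
  Matrix.of fun p q => B p.1 q.1 p.2 q.2

/-- The k(n+1)×k(n+1) block matrix Q(W, G, (c_{ij}); n): diagonal blocks W,
    off-diagonal (i,j) blocks W − c_{ij}·G for i,j ≤ n, identity blocks in the
    last block row/column (except the (n+1,n+1) block, which is zero). -/
def krigQ (n k : ℕ) (W G : Matrix (Fin k) (Fin k) ℝ) (c : Fin n → Fin n → ℝ) :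
    Matrix (Fin (n + 1) × Fin k) (Fin (n + 1) × Fin k) ℝ :=
  blockMat (n + 1) k fun i j =>
    if hi : (i : ℕ) < n then
      if hj : (j : ℕ) < n then
        if i = j then W else W - c ⟨i, hi⟩ ⟨j, hj⟩ • G
      else (1 : Matrix (Fin k) (Fin k) ℝ)
    else if hj : (j : ℕ) < n then (1 : Matrix (Fin k) (Fin k) ℝ)
      else (0 : Matrix (Fin k) (Fin k) ℝ)

/-- The k(n+1)×k(n+1) block matrix M((k_{ij}), (k_i), c; n): (i,j) block
    k_{ij}·G⁻¹ for i,j ≤ n, blocks k_i·I in the last block row/column, and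
    (n+1,n+1) block c·G − W. -/
def krigM (n k : ℕ) (W G : Matrix (Fin k) (Fin k) ℝ)
    (kk : Fin n → Fin n → ℝ) (kv : Fin n → ℝ) (c : ℝ) :
    Matrix (Fin (n + 1) × Fin k) (Fin (n + 1) × Fin k) ℝ :=
  blockMat (n + 1) k fun i j =>
    if hi : (i : ℕ) < n then
      if hj : (j : ℕ) < n then kk ⟨i, hi⟩ ⟨j, hj⟩ • G⁻¹
      else kv ⟨i, hi⟩ • (1 : Matrix (Fin k) (Fin k) ℝ)
    else if hj : (j : ℕ) < n then kv ⟨j, hj⟩ • (1 : Matrix (Fin k) (Fin k) ℝ)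
      else c • G - W

/-- The kriging constraints: symmetry of the k_{ij}, zero column sums of the
    k_{ij}, and the k_i summing to one. -/
def krigConstraints (n : ℕ) (kk : Fin n → Fin n → ℝ) (kv : Fin n → ℝ) : Prop :=
  (∀ i j, kk i j = kk j i) ∧ (∀ j, ∑ i, kk i j = 0) ∧ (∑ i, kv i) = 1

/-- The k × k(n+1) block row matrix B = (W − c₁·G, …, W − cₙ·G, I). -/
def krigB (n k : ℕ) (W G : Matrix (Fin k) (Fin k) ℝ) (cs : Fin n → ℝ) :
    Matrix (Fin k) (Fin (n + 1) × Fin k) ℝ :=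
  Matrix.of fun a q =>
    (if h : (q.1 : ℕ) < n then W - cs ⟨q.1, h⟩ • G
      else (1 : Matrix (Fin k) (Fin k) ℝ)) a q.2

end

lemma blockMat_mul (n k : ℕ) (B C : Fin n → Fin n → Matrix (Fin k) (Fin k) ℝ) :
    blockMat n k B * blockMat n k C = blockMat n k (fun i j => ∑ l, B i l * C l j) := by
  ext ⟨i, a⟩ ⟨j, b⟩
  simp [blockMat, Matrix.mul_apply, Fintype.sum_prod_type, Matrix.sum_apply]

lemma blockMat_one (n k : ℕ) :
    blockMat n k (fun i j => if i = j then 1 else 0) = 1 := by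
  ext ⟨i, a⟩ ⟨j, b⟩
  by_cases h : i = j
  · subst h
    simp [blockMat, Matrix.one_apply, Prod.ext_iff]
  · simp [blockMat, Matrix.one_apply, Prod.ext_iff, h]

/-- The 3k×3k block matrix Q with block rows (W, W − c₁₂·G, I),
    (W − c₁₂·G, W, I), (I, I, 0) is invertible, with the stated inverse, and
    the coefficients k₁₁ = k₂₂ = 1/(2c₁₂), k₁₂ = k₂₁ = −1/(2c₁₂),
    k₁ = k₂ = 1/2 satisfy the kriging constraints. -/
theorem stmt1 (k : ℕ) (hk : 1 ≤ k)
    (W G : Matrix (Fin k) (Fin k) ℝ) (hW : W.IsSymm) (hG : G.IsSymm)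
    (hGinv : IsUnit G) (c12 : ℝ) (hc12 : c12 ≠ 0) :
    IsUnit (krigQ 2 k W G fun _ _ => c12) ∧
    (krigQ 2 k W G fun _ _ => c12)⁻¹ =
      krigM 2 k W G
        ![![1 / (2 * c12), -(1 / (2 * c12))], ![-(1 / (2 * c12)), 1 / (2 * c12)]]
        ![1 / 2, 1 / 2] (c12 / 2) ∧
    krigConstraints 2
      ![![1 / (2 * c12), -(1 / (2 * c12))], ![-(1 / (2 * c12)), 1 / (2 * c12)]]
      ![1 / 2, 1 / 2] := by
  have hGG : G * G⁻¹ = 1 :=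
    Matrix.mul_nonsing_inv G ((Matrix.isUnit_iff_isUnit_det G).mp hGinv)
  have hQM : (krigQ 2 k W G fun _ _ => c12) *
      krigM 2 k W G
        ![![1 / (2 * c12), -(1 / (2 * c12))], ![-(1 / (2 * c12)), 1 / (2 * c12)]]
        ![1 / 2, 1 / 2] (c12 / 2) = 1 := by
    unfold krigQ krigM
    rw [blockMat_mul, ← blockMat_one]
    refine congrArg (blockMat (2 + 1) k) (funext fun i => funext fun j => ?_)
    fin_cases i <;> fin_cases j <;>
      simp [Fin.sum_univ_three, Matrix.smul_mul, Matrix.mul_smul, Matrix.sub_mul,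
        Matrix.mul_sub, hGG, smul_smul, smul_sub, Fin.isValue] <;>
      match_scalars <;> field_simp <;> ring
  refine ⟨?_, Matrix.inv_eq_right_inv hQM, ?_, ?_, ?_⟩
  · exact (Matrix.isUnit_iff_isUnit_det _).mpr (Matrix.isUnit_det_of_right_inverse hQM)
  · intro i j; fin_cases i <;> fin_cases j <;> norm_num
  · intro j; fin_cases j <;> simp [Fin.sum_univ_two]
  · norm_num [Fin.sum_univ_two]
end

section
/- Let m ≥ 3, let W and G be symmetric k×k real matrices with G invertible, and let c_{ij} (1 ≤ i ≠ j ≤ m) be real constants with c_{ij} = c_{ji}. Suppose the sub-matrix D := Q(W, G, (c_{ij})_{2 ≤ i ≠ j ≤ m}; m−1) is invertible with D^{-1} = M((k_{ij}), (k_i), c̃; m−1), where ((k_{ij}), (k_i)) satisfy the kriging constraints, and suppose k* := 2·∑_{i=1}^{m−1} c_{1(i+1)} k_i − ∑_{i=1}^{m−1} ∑_{j=1}^{m−1} c_{1(i+1)} c_{1(j+1)} k_{ij} − c̃ is nonzero. Then Q(W, G, (c_{ij}); m) is invertible and there exist real constants k*_{ij} (1 ≤ i,j ≤ m), k*_i (1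 ≤ i ≤ m) and c* such that ((k*_{ij}), (k*_i)) satisfy the kriging constraints and Q(W, G, (c_{ij}); m)^{-1} = M((k*_{ij}), (k*_i), c*; m). -/
open Matrix

namespace KrigAux

lemma blockMat_mul {n k : ℕ} (B C : Fin n → Fin n → Matrix (Fin k) (Fin k) ℝ) :
    blockMat n k B * blockMat n k C = blockMat n k (fun i j => ∑ l, B i l * C l j) := by
  ext ⟨i, a⟩ ⟨j, b⟩
  simp [blockMat, Matrix.mul_apply, Fintype.sum_prod_type, Matrix.sum_apply]

lemma blockMat_eq_one_iff {n k : ℕ} (hk : 0 < k)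
    (B : Fin n → Fin n → Matrix (Fin k) (Fin k) ℝ) :
    blockMat n k B = 1 ↔ ∀ i j, B i j = if i = j then 1 else 0 := by
  constructor
  · intro h i j
    ext a b
    have := congrFun (congrFun h (i, a)) (j, b)
    simp only [blockMat, Matrix.of_apply] at this
    rw [this]
    by_cases hij : i = j <;> by_cases hab : a = b <;>
      simp [Matrix.one_apply, Prod.ext_iff, hij, hab]
  · intro h
    ext ⟨i, a⟩ ⟨j, b⟩
    rw [show (blockMat n k B) (i,a) (j,b) = B i j a b from rfl, h i j]
    by_cases hij : i = j <;> by_cases hab : a = b <;>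
      simp [Matrix.one_apply, Prod.ext_iff, hij, hab]

end KrigAux

namespace KrigAux

lemma sum_factor {n : ℕ} (g f : Fin n → ℝ) (r : ℝ) (h : ∀ l, g l = r * f l) :
    ∑ l, g l = r * ∑ l, f l := by
  rw [Finset.mul_sum]; exact Finset.sum_congr rfl fun l _ => h l

lemma krig_mul {n k : ℕ} (W G : Matrix (Fin k) (Fin k) ℝ) (hGG : G * G⁻¹ = 1)
    (c kk : Fin n → Fin n → ℝ) (kv : Fin n → ℝ) (ct : ℝ)
    (hsum : ∀ j, ∑ i, kk i j = 0) (hsv : ∑ i, kv i = 1) :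
    krigQ n k W G c * krigM n k W G kk kv ct =
    blockMat (n+1) k (fun i j =>
      if hi : (i:ℕ) < n then
        if hj : (j:ℕ) < n then
          (kv ⟨j,hj⟩ - ∑ l, (if (⟨i,hi⟩:Fin n) = l then 0 else c ⟨i,hi⟩ l) * kk l ⟨j,hj⟩) • (1 : Matrix (Fin k) (Fin k) ℝ)
        else (ct - ∑ l, (if (⟨i,hi⟩:Fin n) = l then 0 else c ⟨i,hi⟩ l) * kv l) • G
      else if hj : (j:ℕ) < n then (0 : Matrix (Fin k) (Fin k) ℝ)
      else (1 : Matrix (Fin k) (Fin k) ℝ)) := by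
  rw [krigQ, krigM, blockMat_mul]
  apply congrArg (blockMat (n+1) k)
  funext i j
  induction i using Fin.lastCases with
  | last =>
    induction j using Fin.lastCases with
    | last =>
      simp only [Fin.val_last, lt_irrefl, dite_false]
      rw [Fin.sum_univ_castSucc]
      simp only [Fin.coe_castSucc, Fin.is_lt, dite_true, Fin.val_last, lt_irrefl, dite_false,
        one_mul, zero_mul, add_zero, Fin.eta]
      rw [← Finset.sum_smul, hsv, one_smul]
    | cast q =>
      simp only [Fin.val_last, lt_irrefl, dite_false, Fin.coe_castSucc, Fin.is_lt, dite_true]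
      rw [Fin.sum_univ_castSucc]
      simp only [Fin.coe_castSucc, Fin.is_lt, dite_true, Fin.val_last, lt_irrefl, dite_false,
        one_mul, zero_mul, add_zero, Fin.eta]
      rw [← Finset.sum_smul, hsum, zero_smul]
  | cast p =>
    induction j using Fin.lastCases with
    | last =>
      simp only [Fin.coe_castSucc, Fin.is_lt, dite_true, Fin.val_last, lt_irrefl, dite_false]
      rw [Fin.sum_univ_castSucc]
      simp only [Fin.coe_castSucc, Fin.is_lt, dite_true, Fin.val_last, lt_irrefl, dite_false,
        one_mul, Fin.eta]
      have key : ∀ x : Fin n,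
          (if p.castSucc = x.castSucc then W else W - c p x • G) * (kv x • (1 : Matrix (Fin k) (Fin k) ℝ)) =
          kv x • W - ((if p = x then 0 else c p x) * kv x) • G := by
        intro x
        simp only [Fin.castSucc_inj]
        split_ifs with h <;> simp [Matrix.mul_smul, sub_mul, Matrix.smul_mul, smul_smul, smul_sub, mul_comm]
      simp only [key]
      rw [Finset.sum_sub_distrib, ← Finset.sum_smul, hsv, one_smul, ← Finset.sum_smul, sub_smul]
      abel
    | cast q =>
      simp only [Fin.coe_castSucc, Fin.is_lt, dite_true]
      rw [Fin.sum_univ_castSucc]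
      simp only [Fin.coe_castSucc, Fin.is_lt, dite_true, Fin.val_last, lt_irrefl, dite_false,
        one_mul, Fin.eta]
      have key : ∀ x : Fin n,
          (if p.castSucc = x.castSucc then W else W - c p x • G) * (kk x q • G⁻¹) =
          kk x q • (W * G⁻¹) - ((if p = x then 0 else c p x) * kk x q) • (1 : Matrix (Fin k) (Fin k) ℝ) := by
        intro x
        simp only [Fin.castSucc_inj]
        split_ifs with h <;>
          simp [Matrix.mul_smul, sub_mul, Matrix.smul_mul, smul_smul, smul_sub, hGG, mul_comm]
      simp only [key]
      rw [Finset.sum_sub_distrib, ← Finset.sum_smul, hsum, zero_smul, zero_sub, ← Finset.sum_smul,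
        sub_smul]
      abel

end KrigAux

namespace KrigAux

lemma krig_mul_eq_one {n k : ℕ} (hk : 0 < k) (W G : Matrix (Fin k) (Fin k) ℝ)
    (hGG : G * G⁻¹ = 1)
    (c kk : Fin n → Fin n → ℝ) (kv : Fin n → ℝ) (ct : ℝ)
    (hsum : ∀ j, ∑ i, kk i j = 0) (hsv : ∑ i, kv i = 1)
    (hstar : ∀ i j : Fin n, kv j - ∑ l, (if i = l then 0 else c i l) * kk l j
      = if i = j then 1 else 0)
    (hss : ∀ i : Fin n, ct - ∑ l, (if i = l then 0 else c i l) * kv l = 0) :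
    krigQ n k W G c * krigM n k W G kk kv ct = 1 := by
  rw [krig_mul W G hGG c kk kv ct hsum hsv, blockMat_eq_one_iff hk]
  intro i j
  by_cases hi : (i : ℕ) < n
  · by_cases hj : (j : ℕ) < n
    · simp only [hi, hj, dite_true, hstar ⟨i, hi⟩ ⟨j, hj⟩]
      have : (⟨(i:ℕ), hi⟩ : Fin n) = ⟨(j:ℕ), hj⟩ ↔ i = j := by
        rw [Fin.mk.injEq]; exact ⟨fun h => Fin.ext h, fun h => congrArg Fin.val h⟩
      by_cases hij : i = j
      · simp [hij]
      · rw [if_neg hij, if_neg (fun h => hij (this.mp h)), zero_smul]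
    · have hij : i ≠ j := fun h => hj (h ▸ hi)
      simp only [hi, hj, dite_true, dite_false, hss ⟨i, hi⟩, zero_smul, if_neg hij]
  · by_cases hj : (j : ℕ) < n
    · have hij : i ≠ j := fun h => hi (h ▸ hj)
      simp [hi, hj, hij]
    · have hij : i = j := by
        apply Fin.ext; omega
      simp [hi, hj, hij]

lemma smul_one_inj {k : ℕ} (hk : 0 < k) {a b : ℝ}
    (h : a • (1 : Matrix (Fin k) (Fin k) ℝ) = b • 1) : a = b := by
  have := congrFun (congrFun h ⟨0, hk⟩) ⟨0, hk⟩
  simpa [Matrix.one_apply] using this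

lemma smul_G_zero {k : ℕ} (hk : 0 < k) {G : Matrix (Fin k) (Fin k) ℝ}
    (hGG : G * G⁻¹ = 1) {a : ℝ} (h : a • G = 0) : a = 0 := by
  by_contra ha
  have hG0 : G = 0 := by
    have := congrArg (fun M => a⁻¹ • M) h
    simpa [smul_smul, inv_mul_cancel₀ ha] using this
  rw [hG0, Matrix.zero_mul] at hGG
  have := congrFun (congrFun hGG ⟨0, hk⟩) ⟨0, hk⟩
  simp [Matrix.one_apply] at this

noncomputable def newKK {n : ℕ} (kstar : ℝ) (t : Fin n → ℝ) (kk : Fin n → Fin n → ℝ) :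
    Fin (n + 1) → Fin (n + 1) → ℝ := fun i j =>
  Fin.cases (Fin.cases kstar⁻¹ (fun q => -(kstar⁻¹ * t q)) j)
    (fun p => Fin.cases (-(kstar⁻¹ * t p)) (fun q => kk p q + kstar⁻¹ * t p * t q) j) i

@[simp] lemma newKK_zero_zero {n : ℕ} (kstar : ℝ) (t : Fin n → ℝ) (kk) :
    newKK kstar t kk 0 0 = kstar⁻¹ := rfl
@[simp] lemma newKK_zero_succ {n : ℕ} (kstar : ℝ) (t : Fin n → ℝ) (kk) (q : Fin n) :
    newKK kstar t kk 0 q.succ = -(kstar⁻¹ * t q) := by simp [newKK]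
@[simp] lemma newKK_succ_zero {n : ℕ} (kstar : ℝ) (t : Fin n → ℝ) (kk) (p : Fin n) :
    newKK kstar t kk p.succ 0 = -(kstar⁻¹ * t p) := by simp [newKK]
@[simp] lemma newKK_succ_succ {n : ℕ} (kstar : ℝ) (t : Fin n → ℝ) (kk) (p q : Fin n) :
    newKK kstar t kk p.succ q.succ = kk p q + kstar⁻¹ * t p * t q := by simp [newKK]

noncomputable def newKV {n : ℕ} (kstar s : ℝ) (t kv : Fin n → ℝ) : Fin (n + 1) → ℝ :=
  Fin.cases (-(kstar⁻¹ * s)) (fun p => kv p + kstar⁻¹ * s * t p)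

@[simp] lemma newKV_zero {n : ℕ} (kstar s : ℝ) (t kv : Fin n → ℝ) :
    newKV kstar s t kv 0 = -(kstar⁻¹ * s) := rfl
@[simp] lemma newKV_succ {n : ℕ} (kstar s : ℝ) (t kv : Fin n → ℝ) (p : Fin n) :
    newKV kstar s t kv p.succ = kv p + kstar⁻¹ * s * t p := by simp [newKV]

end KrigAux

namespace KrigAux

@[simp] lemma zero_eq_succ {n : ℕ} (l : Fin n) :
    ((0 : Fin (n + 1)) = l.succ) ↔ False :=
  ⟨fun h => Fin.succ_ne_zero l h.symm, False.elim⟩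

end KrigAux


/-- Induction step: with m = n+1 (so m ≥ 3 means n ≥ 2), if the sub-matrix
    D = Q(W, G, (c_{ij})_{2 ≤ i ≠ j ≤ m}; m−1) is invertible with inverse of
    the form M((k_{ij}), (k_i), c̃; m−1), where the coefficients satisfy the
    kriging constraints, and if k* ≠ 0, then Q(W, G, (c_{ij}); m) is
    invertible and its inverse is of the form M((k*_{ij}), (k*_i), c*; m) with
    coefficients satisfying the kriging constraints. -/
theorem stmt3 (k n : ℕ) (hk : 1 ≤ k) (hn : 2 ≤ n)
    (W G : Matrix (Fin k) (Fin k) ℝ) (hW : W.IsSymm) (hG : G.IsSymm)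
    (hGinv : IsUnit G)
    (c : Fin (n + 1) → Fin (n + 1) → ℝ) (hc : ∀ i j, c i j = c j i)
    (kk : Fin n → Fin n → ℝ) (kv : Fin n → ℝ) (ct : ℝ)
    (hconstr : krigConstraints n kk kv)
    (hD : IsUnit (krigQ n k W G fun a b => c a.succ b.succ))
    (hDinv : (krigQ n k W G fun a b => c a.succ b.succ)⁻¹ =
      krigM n k W G kk kv ct)
    (kstar : ℝ)
    (hkstar : kstar = 2 * (∑ i, c 0 i.succ * kv i) -
      (∑ i, ∑ j, c 0 i.succ * c 0 j.succ * kk i j) - ct)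
    (hkne : kstar ≠ 0) :
    IsUnit (krigQ (n + 1) k W G c) ∧
    ∃ (kk' : Fin (n + 1) → Fin (n + 1) → ℝ) (kv' : Fin (n + 1) → ℝ) (c' : ℝ),
      krigConstraints (n + 1) kk' kv' ∧
      (krigQ (n + 1) k W G c)⁻¹ = krigM (n + 1) k W G kk' kv' c' := by
    classical
  obtain ⟨hkksymm, hkkcol, hkvsum⟩ := hconstr
  have hk0 : 0 < k := hk
  have hGdet : IsUnit G.det := (Matrix.isUnit_iff_isUnit_det G).mp hGinv
  have hGG : G * G⁻¹ = 1 := Matrix.mul_nonsing_inv G hGdet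
  have hDM : (krigQ n k W G fun a b => c a.succ b.succ) * krigM n k W G kk kv ct = 1 := by
    have h1 := Matrix.mul_nonsing_inv (krigQ n k W G fun a b => c a.succ b.succ)
      ((Matrix.isUnit_iff_isUnit_det _).mp hD)
    rwa [hDinv] at h1
  rw [KrigAux.krig_mul W G hGG _ kk kv ct hkkcol hkvsum,
    KrigAux.blockMat_eq_one_iff hk0] at hDM
  have star : ∀ p q : Fin n,
      ∑ l, (if p = l then 0 else c p.succ l.succ) * kk l q
        = kv q - (if p = q then 1 else 0) := by
    intro p q
    have h := hDM p.castSucc q.castSucc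
    simp only [Fin.coe_castSucc, Fin.is_lt, dite_true, Fin.eta, Fin.castSucc_inj] at h
    by_cases hpq : p = q
    · rw [if_pos hpq] at h
      have := KrigAux.smul_one_inj hk0
        (h.trans (one_smul ℝ (1 : Matrix (Fin k) (Fin k) ℝ)).symm)
      rw [if_pos hpq]; linarith
    · rw [if_neg hpq] at h
      have := KrigAux.smul_one_inj hk0
        (h.trans (zero_smul ℝ (1 : Matrix (Fin k) (Fin k) ℝ)).symm)
      rw [if_neg hpq]; linarith
  have starstar : ∀ p : Fin n,
      ∑ l, (if p = l then 0 else c p.succ l.succ) * kv l = ct := by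
    intro p
    have h := hDM p.castSucc (Fin.last n)
    have hne : p.castSucc ≠ Fin.last n := (Fin.castSucc_lt_last p).ne
    simp only [Fin.coe_castSucc, Fin.is_lt, dite_true, Fin.val_last, lt_irrefl, dite_false,
      Fin.eta, if_neg hne] at h
    have := KrigAux.smul_G_zero hk0 hGG h
    linarith
  set t : Fin n → ℝ := fun j => kv j - ∑ l, c 0 l.succ * kk l j with ht
  set s : ℝ := ct - ∑ l, c 0 l.succ * kv l with hs
  have hkkrow : ∀ l, ∑ j, kk l j = 0 := by
    intro l
    rw [Finset.sum_congr rfl fun j _ => hkksymm l j]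
    exact hkkcol l
  have h1 : ∑ j, t j = 1 := by
    simp only [ht]
    rw [Finset.sum_sub_distrib, hkvsum]
    have hz : ∑ j, ∑ l, c 0 l.succ * kk l j = 0 := by
      rw [Finset.sum_comm]
      apply Finset.sum_eq_zero
      intro l _
      rw [← Finset.mul_sum, hkkrow l, mul_zero]
    rw [hz]; ring
  have hAkk : ∀ q, ∑ l, c 0 l.succ * kk l q = kv q - t q := by
    intro q; simp only [ht]; ring
  have hAkv : ∑ l, c 0 l.succ * kv l = ct - s := by
    rw [hs]; ring
  have h2 : ∑ j, c 0 j.succ * t j = kstar + s := by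
    simp only [ht]
    have e : ∑ j, c 0 j.succ * (kv j - ∑ l, c 0 l.succ * kk l j)
        = ∑ j, c 0 j.succ * kv j - ∑ j, ∑ l, c 0 j.succ * c 0 l.succ * kk l j := by
      rw [← Finset.sum_sub_distrib]
      apply Finset.sum_congr rfl
      intro j _
      rw [mul_sub, Finset.mul_sum]
      congr 1
      apply Finset.sum_congr rfl
      intro l _
      ring
    rw [e]
    have e2 : ∑ j, ∑ l, c 0 j.succ * c 0 l.succ * kk l j
        = ∑ i, ∑ j, c 0 i.succ * c 0 j.succ * kk i j := by
      rw [Finset.sum_comm]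
      apply Finset.sum_congr rfl; intro l _
      apply Finset.sum_congr rfl; intro j _
      rw [hkksymm l j]; ring
    rw [e2, hkstar, hs]; ring
  have h5 : ∀ p : Fin n,
      ∑ l, (if p = l then 0 else c p.succ l.succ) * t l = s + c 0 p.succ := by
    intro p
    simp only [ht]
    have e : ∑ l, (if p = l then 0 else c p.succ l.succ) * (kv l - ∑ m, c 0 m.succ * kk m l)
        = ∑ l, (if p = l then 0 else c p.succ l.succ) * kv l
          - ∑ l, ∑ m, c 0 m.succ * ((if p = l then 0 else c p.succ l.succ) * kk l m) := by
      rw [← Finset.sum_sub_distrib]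
      apply Finset.sum_congr rfl; intro l _
      rw [mul_sub, Finset.mul_sum]
      congr 1
      apply Finset.sum_congr rfl; intro m _
      rw [hkksymm m l]; ring
    rw [e, starstar p]
    have e2 : ∑ l, ∑ m, c 0 m.succ * ((if p = l then 0 else c p.succ l.succ) * kk l m)
        = ∑ m, c 0 m.succ * (kv m - (if p = m then 1 else 0)) := by
      rw [Finset.sum_comm]
      apply Finset.sum_congr rfl; intro m _
      rw [← Finset.mul_sum, star p m]
    rw [e2]
    have e3 : ∑ m, c 0 m.succ * (kv m - (if p = m then 1 else 0))
        = (∑ m, c 0 m.succ * kv m) - c 0 p.succ := by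
      simp [mul_sub, Finset.sum_sub_distrib, mul_ite, mul_one, mul_zero, Finset.sum_ite_eq]
    rw [e3, hAkv]; ring
  -- the new coefficients
  have hsum' : ∀ j, ∑ i, KrigAux.newKK kstar t kk i j = 0 := by
    intro j
    refine Fin.cases ?_ (fun q => ?_) j
    · rw [Fin.sum_univ_succ]
      simp only [KrigAux.newKK_zero_zero, KrigAux.newKK_succ_zero]
      rw [KrigAux.sum_factor _ t (-kstar⁻¹) (fun l => by ring), h1]
      field_simp
      ring
    · rw [Fin.sum_univ_succ]
      simp only [KrigAux.newKK_zero_succ, KrigAux.newKK_succ_succ]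
      rw [Finset.sum_add_distrib, hkkcol q,
        KrigAux.sum_factor _ t (kstar⁻¹ * t q) (fun l => by ring), h1]
      ring
  have hsv' : ∑ i, KrigAux.newKV kstar s t kv i = 1 := by
    rw [Fin.sum_univ_succ]
    simp only [KrigAux.newKV_zero, KrigAux.newKV_succ]
    rw [Finset.sum_add_distrib, hkvsum,
      KrigAux.sum_factor _ t (kstar⁻¹ * s) (fun l => by ring), h1]
    ring
  have hsymm' : ∀ i j, KrigAux.newKK kstar t kk i j = KrigAux.newKK kstar t kk j i := by
    intro i j
    refine Fin.cases ?_ (fun p => ?_) i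
    · refine Fin.cases ?_ (fun q => ?_) j <;> simp
    · refine Fin.cases ?_ (fun q => ?_) j <;> simp
      rw [hkksymm p q]; ring
  have hstar' : ∀ i j : Fin (n + 1),
      KrigAux.newKV kstar s t kv j
        - ∑ l, (if i = l then 0 else c i l) * KrigAux.newKK kstar t kk l j
      = if i = j then 1 else 0 := by
    intro i j
    refine Fin.cases ?_ (fun p => ?_) i
    · refine Fin.cases ?_ (fun q => ?_) j
      · rw [Fin.sum_univ_succ]
        simp only [KrigAux.newKV_zero, KrigAux.newKK_zero_zero, KrigAux.newKK_succ_zero,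
          if_pos rfl, KrigAux.zero_eq_succ, if_false, if_neg, if_true]
        rw [KrigAux.sum_factor _ (fun l => c 0 l.succ * t l) (-kstar⁻¹) (fun l => by ring), h2]
        field_simp
        ring
      · rw [Fin.sum_univ_succ]
        simp only [KrigAux.newKV_succ, KrigAux.newKK_zero_succ, KrigAux.newKK_succ_succ,
          if_pos rfl, KrigAux.zero_eq_succ, if_false, if_true]
        simp only [mul_add]
        rw [Finset.sum_add_distrib, hAkk q,
          KrigAux.sum_factor _ (fun l => c 0 l.succ * t l) (kstar⁻¹ * t q) (fun l => by ring),
          h2]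
        field_simp
        ring
    · refine Fin.cases ?_ (fun q => ?_) j
      · rw [Fin.sum_univ_succ]
        simp only [KrigAux.newKV_zero, KrigAux.newKK_zero_zero, KrigAux.newKK_succ_zero,
          Fin.succ_ne_zero, if_false, Fin.succ_inj]
        rw [KrigAux.sum_factor _ (fun l => (if p = l then 0 else c p.succ l.succ) * t l)
            (-kstar⁻¹) (fun l => by ring), h5 p, hc p.succ 0]
        field_simp
        ring
      · rw [Fin.sum_univ_succ]
        simp only [KrigAux.newKV_succ, KrigAux.newKK_zero_succ, KrigAux.newKK_succ_succ,
          Fin.succ_ne_zero, if_false, Fin.succ_inj]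
        simp only [mul_add]
        rw [Finset.sum_add_distrib, star p q,
          KrigAux.sum_factor _ (fun l => (if p = l then 0 else c p.succ l.succ) * t l)
            (kstar⁻¹ * t q) (fun l => by ring), h5 p, hc p.succ 0]
        by_cases hpq : p = q
        · simp only [hpq, if_pos rfl]
          field_simp
          ring
        · simp only [if_neg hpq]
          field_simp
          ring
  have hss' : ∀ i : Fin (n + 1),
      (ct + kstar⁻¹ * s * s)
        - ∑ l, (if i = l then 0 else c i l) * KrigAux.newKV kstar s t kv l = 0 := by
    intro i
    refine Fin.cases ?_ (fun p => ?_) i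
    · rw [Fin.sum_univ_succ]
      simp only [KrigAux.newKV_zero, KrigAux.newKV_succ, if_pos rfl, KrigAux.zero_eq_succ,
        if_false, if_true]
      simp only [mul_add]
      rw [Finset.sum_add_distrib, hAkv,
        KrigAux.sum_factor _ (fun l => c 0 l.succ * t l) (kstar⁻¹ * s) (fun l => by ring), h2]
      field_simp
      ring
    · rw [Fin.sum_univ_succ]
      simp only [KrigAux.newKV_zero, KrigAux.newKV_succ, Fin.succ_ne_zero, if_false,
        Fin.succ_inj]
      simp only [mul_add]
      rw [Finset.sum_add_distrib, starstar p,
        KrigAux.sum_factor _ (fun l => (if p = l then 0 else c p.succ l.succ) * t l)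
          (kstar⁻¹ * s) (fun l => by ring), h5 p, hc p.succ 0]
      field_simp
      ring
  have hQM : krigQ (n + 1) k W G c *
      krigM (n + 1) k W G (KrigAux.newKK kstar t kk) (KrigAux.newKV kstar s t kv)
        (ct + kstar⁻¹ * s * s) = 1 :=
    KrigAux.krig_mul_eq_one hk0 W G hGG c _ _ _ hsum' hsv' hstar' hss'
  have hU : IsUnit (krigQ (n + 1) k W G c) := by
    rw [Matrix.isUnit_iff_isUnit_det]
    exact IsUnit.of_mul_eq_one _ (by rw [← Matrix.det_mul, hQM, Matrix.det_one])
  exact ⟨hU, KrigAux.newKK kstar t kk, KrigAux.newKV kstar s t kv, ct + kstar⁻¹ * s * s,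
    ⟨hsymm', hsum', hsv'⟩, Matrix.inv_eq_right_inv hQM⟩
end

section
/- Let m ≥ 3, let W and G be symmetric k×k real matrices with G invertible, let c₂, …, c_m be real constants, and let k_{ij} (1 ≤ i,j ≤ m−1), k_i (1 ≤ i ≤ m−1) and c̃ be real constants such that ((k_{ij}), (k_i)) satisfy the kriging constraints. Let B be the k × km block row matrix (W − c₂·G, …, W − c_m·G, I), and let M := M((k_{ij}), (k_i), c̃; m−1). Then the Schur complement W − B·M·Bᵀ equals k*·G, where k* := 2·∑_{i=1}^{m−1} c_{i+1} k_i − ∑_{i=1}^{m−1} ∑_{j=1}^{m−1} c_{i+1} c_{j+1} k_{ij} − c̃ . In particular, if k* ≠ 0 then the Schur complement is invertible with inverse (1/k*)·G^{-1}. -/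
open Matrix

noncomputable section KrigAux

def Bblk (n k : ℕ) (W G : Matrix (Fin k) (Fin k) ℝ) (cs : Fin n → ℝ) :
    Fin (n + 1) → Matrix (Fin k) (Fin k) ℝ :=
  fun p => if h : (p : ℕ) < n then W - cs ⟨p, h⟩ • G else 1

def Mblk (n k : ℕ) (W G : Matrix (Fin k) (Fin k) ℝ)
    (kk : Fin n → Fin n → ℝ) (kv : Fin n → ℝ) (c : ℝ) :
    Fin (n + 1) → Fin (n + 1) → Matrix (Fin k) (Fin k) ℝ :=
  fun i j =>
    if hi : (i : ℕ) < n then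
      if hj : (j : ℕ) < n then kk ⟨i, hi⟩ ⟨j, hj⟩ • G⁻¹
      else kv ⟨i, hi⟩ • (1 : Matrix (Fin k) (Fin k) ℝ)
    else if hj : (j : ℕ) < n then kv ⟨j, hj⟩ • (1 : Matrix (Fin k) (Fin k) ℝ)
      else c • G - W

variable {n k : ℕ} {W G : Matrix (Fin k) (Fin k) ℝ} {cs : Fin n → ℝ}
  {kk : Fin n → Fin n → ℝ} {kv : Fin n → ℝ} {c : ℝ}

lemma Bblk_castSucc (i : Fin n) :
    Bblk n k W G cs i.castSucc = W - cs i • G := by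
  simp [Bblk, i.is_lt]

lemma Bblk_last : Bblk n k W G cs (Fin.last n) = 1 := by
  simp [Bblk]

lemma Mblk_cc (i j : Fin n) :
    Mblk n k W G kk kv c i.castSucc j.castSucc = kk i j • G⁻¹ := by
  simp [Mblk, i.is_lt, j.is_lt]

lemma Mblk_cl (i : Fin n) :
    Mblk n k W G kk kv c i.castSucc (Fin.last n) = kv i • 1 := by
  simp [Mblk, i.is_lt]

lemma Mblk_lc (j : Fin n) :
    Mblk n k W G kk kv c (Fin.last n) j.castSucc = kv j • 1 := by
  simp [Mblk, j.is_lt]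

lemma Mblk_ll : Mblk n k W G kk kv c (Fin.last n) (Fin.last n) = c • G - W := by
  simp [Mblk]

lemma rowBlkMul (n k : ℕ) (Bf Cf : Fin n → Matrix (Fin k) (Fin k) ℝ)
    (Mf : Fin n → Fin n → Matrix (Fin k) (Fin k) ℝ) :
    (Matrix.of fun a q => Bf q.1 a q.2 : Matrix (Fin k) (Fin n × Fin k) ℝ) * blockMat n k Mf *
      (Matrix.of fun (a : Fin k) (q : Fin n × Fin k) => Cf q.1 a q.2)ᵀ =
    ∑ p : Fin n, ∑ q : Fin n, Bf p * Mf p q * (Cf q)ᵀ := by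
  ext a b
  simp only [Matrix.sum_apply, Matrix.mul_apply, Matrix.transpose_apply, Matrix.of_apply,
    blockMat, Fintype.sum_prod_type, Finset.sum_mul, Finset.mul_sum]
  conv_rhs => rw [Finset.sum_comm]
  refine Finset.sum_congr rfl fun qp _ => ?_
  conv_rhs => rw [Finset.sum_comm]

lemma krigKey (hW : W.IsSymm) (hG : G.IsSymm) (hGinv : IsUnit G)
    (hsym : ∀ i j, kk i j = kk j i) (hcol : ∀ j, ∑ i, kk i j = 0)
    (hsum : (∑ i, kv i) = 1) :
    krigB n k W G cs * krigM n k W G kk kv c * (krigB n k W G cs)ᵀ =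
      W - (2 * (∑ i, cs i * kv i) - (∑ i, ∑ j, cs i * cs j * kk i j) - c) • G := by
  have hGdet : IsUnit G.det := (Matrix.isUnit_iff_isUnit_det G).mp hGinv
  have hGi : G * G⁻¹ = 1 := Matrix.mul_nonsing_inv G hGdet
  have hGi' : G⁻¹ * G = 1 := Matrix.nonsing_inv_mul G hGdet
  have hBM : krigB n k W G cs * krigM n k W G kk kv c * (krigB n k W G cs)ᵀ =
      ∑ p : Fin (n+1), ∑ q : Fin (n+1),
        Bblk n k W G cs p * Mblk n k W G kk kv c p q * (Bblk n k W G cs q)ᵀ :=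
    rowBlkMul (n + 1) k (Bblk n k W G cs) (Bblk n k W G cs) (Mblk n k W G kk kv c)
  rw [hBM]
  have hprod : ∀ i j : Fin n, (W - cs i • G) * G⁻¹ * (W - cs j • G) =
      (W * G⁻¹ * W) - cs j • W - cs i • W + (cs i * cs j) • G := by
    intro i j
    have e1 : (W - cs i • G) * G⁻¹ = W * G⁻¹ - cs i • 1 := by
      rw [Matrix.sub_mul, Matrix.smul_mul, hGi]
    rw [e1]
    simp only [Matrix.sub_mul, Matrix.mul_sub, Matrix.smul_mul, Matrix.mul_smul,
      Matrix.one_mul, Matrix.mul_one, smul_sub, smul_smul, Matrix.mul_assoc, hGi']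
    module
  have hrow : ∀ i : Fin n, ∑ j, kk i j = 0 := by
    intro i
    calc ∑ j, kk i j = ∑ j, kk j i := Finset.sum_congr rfl fun j _ => hsym i j
    _ = 0 := hcol i
  have inner : ∀ i : Fin n, (∑ j, kk i j • ((W - cs i • G) * G⁻¹ * (W - cs j • G)))
      = (∑ j, cs i * cs j * kk i j) • G - (∑ j, kk i j * cs j) • W := by
    intro i
    have c1 : ∑ j, kk i j * cs i = 0 := by rw [← Finset.sum_mul, hrow i, zero_mul]
    have c3 : ∑ j, kk i j * (cs i * cs j) = ∑ j, cs i * cs j * kk i j :=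
      Finset.sum_congr rfl fun j _ => by ring
    simp only [hprod, smul_sub, smul_add, smul_smul, Finset.sum_add_distrib,
      Finset.sum_sub_distrib, ← Finset.sum_smul]
    rw [hrow i, c1, c3, zero_smul, zero_smul]
    module
  simp only [Fin.sum_univ_castSucc, Bblk_castSucc, Bblk_last, Mblk_cc, Mblk_cl, Mblk_lc,
    Mblk_ll, Matrix.transpose_sub, Matrix.transpose_smul, Matrix.transpose_one, hW.eq, hG.eq,
    Matrix.mul_one, Matrix.one_mul, Matrix.mul_smul, Matrix.smul_mul]
  simp only [inner]
  have c2 : ∑ i : Fin n, ∑ j, kk i j * cs j = 0 := by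
    rw [Finset.sum_comm]
    refine Finset.sum_eq_zero fun j _ => ?_
    rw [← Finset.sum_mul, hcol j, zero_mul]
  have c4 : ∑ i : Fin n, kv i * cs i = ∑ i : Fin n, cs i * kv i :=
    Finset.sum_congr rfl fun i _ => by ring
  simp only [smul_sub, smul_smul, Finset.sum_add_distrib, Finset.sum_sub_distrib,
    ← Finset.sum_smul]
  rw [c2, c4, hsum, zero_smul, one_smul]
  module

end KrigAux

/-- With m = n+1 (so m ≥ 3 means n ≥ 2) and cs i = c_{i+1}: the Schur
    complement W − B·M·Bᵀ equals k*·G, where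
    k* = 2·∑ c_{i+1} k_i − ∑∑ c_{i+1} c_{j+1} k_{ij} − c̃; in particular, if
    k* ≠ 0, the Schur complement is invertible with inverse (1/k*)·G⁻¹. -/
theorem stmt5 (k n : ℕ) (hk : 1 ≤ k) (hn : 2 ≤ n)
    (W G : Matrix (Fin k) (Fin k) ℝ) (hW : W.IsSymm) (hG : G.IsSymm)
    (hGinv : IsUnit G) (cs : Fin n → ℝ)
    (kk : Fin n → Fin n → ℝ) (kv : Fin n → ℝ) (ct : ℝ)
    (hconstr : krigConstraints n kk kv)
    (kstar : ℝ)
    (hkstar : kstar = 2 * (∑ i, cs i * kv i) -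
      (∑ i, ∑ j, cs i * cs j * kk i j) - ct) :
    W - krigB n k W G cs * krigM n k W G kk kv ct * (krigB n k W G cs)ᵀ =
      kstar • G ∧
    (kstar ≠ 0 →
      IsUnit (W - krigB n k W G cs * krigM n k W G kk kv ct *
        (krigB n k W G cs)ᵀ) ∧
      (W - krigB n k W G cs * krigM n k W G kk kv ct *
        (krigB n k W G cs)ᵀ)⁻¹ = (1 / kstar) • G⁻¹) := by
  obtain ⟨hsym, hcol, hsum⟩ := hconstr
  have hGdet : IsUnit G.det := (Matrix.isUnit_iff_isUnit_det G).mp hGinv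
  have hGi : G * G⁻¹ = 1 := Matrix.mul_nonsing_inv G hGdet
  have key : krigB n k W G cs * krigM n k W G kk kv ct * (krigB n k W G cs)ᵀ =
      W - kstar • G := by
    rw [krigKey hW hG hGinv hsym hcol hsum, hkstar]
  have main : W - krigB n k W G cs * krigM n k W G kk kv ct * (krigB n k W G cs)ᵀ =
      kstar • G := by
    rw [key, sub_sub_cancel]
  refine ⟨main, fun h => ?_⟩
  have hinv : (kstar • G) * ((1 / kstar) • G⁻¹) = 1 := by
    rw [Matrix.smul_mul, Matrix.mul_smul, smul_smul, hGi]
    rw [show kstar * (1 / kstar) = 1 by field_simp]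
    rw [one_smul]
  constructor
  · rw [main]
    exact (Matrix.isUnit_iff_isUnit_det _).mpr (Matrix.isUnit_det_of_right_inverse hinv)
  · rw [main]
    exact Matrix.inv_eq_right_inv hinv
end

section
/- Let m ≥ 3, let W and G be symmetric k×k real matrices with G invertible, let c₂, …, c_m be real constants, and let k_{ij} (1 ≤ i,j ≤ m−1), k_i (1 ≤ i ≤ m−1) and c̃ be real constants such that ((k_{ij}), (k_i)) satisfy the kriging constraints. Let B be the k × km block row matrix (W − c₂·G, …, W − c_m·G, I) and let M := M((k_{ij}), (k_i), c̃; m−1). Define β_i := k_i − ∑_{l=1}^{m−1} c_{l+1} k_{li}, g := c̃ − ∑_{l=1}^{m−1} c_{l+1} k_l, and suppose k* := 2·∑_{l=1}^{m−1} c_{l+1} k_l − ∑_{l=1}^{m−1} ∑_{j=1}^{m−1} c_{l+1} c_{j+1} k_{lj} − c̃ is nonzero. Then the km × km matrix K := M + M·Bᵀ·((1/k*)·G^{-1})·B·M has the following block structure: for 1 ≤ i,j ≤ m−1 its (i,j) block equals (k_{ij} + β_i β_j / k*)·G^{-1}; for 1 ≤ i ≤ m−1 its (i,m) and (m,i) blocks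 equal (k_i + β_i g / k*)·I; and its (m,m) block equals (c̃ + g²/k*)·G − W. -/
open Matrix

/-- With m = n+1 (so m ≥ 3 means n ≥ 2) and cs i = c_{i+1}: the block
    structure of K = M + M·Bᵀ·((1/k*)·G⁻¹)·B·M. -/
theorem stmt7 (k n : ℕ) (hk : 1 ≤ k) (hn : 2 ≤ n)
    (W G : Matrix (Fin k) (Fin k) ℝ) (hW : W.IsSymm) (hG : G.IsSymm)
    (hGinv : IsUnit G) (cs : Fin n → ℝ)
    (kk : Fin n → Fin n → ℝ) (kv : Fin n → ℝ) (ct : ℝ)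
    (hconstr : krigConstraints n kk kv)
    (β : Fin n → ℝ) (hβ : ∀ i, β i = kv i - ∑ l, cs l * kk l i)
    (g : ℝ) (hg : g = ct - ∑ l, cs l * kv l)
    (kstar : ℝ)
    (hkstar : kstar = 2 * (∑ l, cs l * kv l) -
      (∑ l, ∑ j, cs l * cs j * kk l j) - ct)
    (hkne : kstar ≠ 0) :
    krigM n k W G kk kv ct +
      krigM n k W G kk kv ct * (krigB n k W G cs)ᵀ * ((1 / kstar) • G⁻¹) *
        krigB n k W G cs * krigM n k W G kk kv ct =
    blockMat (n + 1) k (fun i j =>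
      if hi : (i : ℕ) < n then
        if hj : (j : ℕ) < n then
          (kk ⟨i, hi⟩ ⟨j, hj⟩ + β ⟨i, hi⟩ * β ⟨j, hj⟩ / kstar) • G⁻¹
        else (kv ⟨i, hi⟩ + β ⟨i, hi⟩ * g / kstar) •
          (1 : Matrix (Fin k) (Fin k) ℝ)
      else if hj : (j : ℕ) < n then
        (kv ⟨j, hj⟩ + β ⟨j, hj⟩ * g / kstar) • (1 : Matrix (Fin k) (Fin k) ℝ)
      else (ct + g ^ 2 / kstar) • G - W) := by
  obtain ⟨hsym, hcol, hsum⟩ := hconstr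
  have hdet : IsUnit G.det := (Matrix.isUnit_iff_isUnit_det G).mp hGinv
  have hGG : G * G⁻¹ = 1 := Matrix.mul_nonsing_inv G hdet
  have hGG' : G⁻¹ * G = 1 := Matrix.nonsing_inv_mul G hdet
  have hGiS : (G⁻¹).IsSymm := by
    rw [Matrix.IsSymm, Matrix.transpose_nonsing_inv, hG.eq]
  set M := krigM n k W G kk kv ct with hM
  set B := krigB n k W G cs with hB
  set X : Matrix (Fin k) (Fin k) ℝ := (1 / kstar) • G⁻¹ with hX
  set blk : Fin (n+1) → Matrix (Fin k) (Fin k) ℝ :=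
    fun i => if h : (i : ℕ) < n then β ⟨i, h⟩ • 1 else g • G with hblk
  set R : Matrix (Fin k) (Fin (n+1) × Fin k) ℝ :=
    Matrix.of fun a q => blk q.1 a q.2 with hR
  -- block-level identities for B * M
  have hBM1 : ∀ j : Fin n,
      (∑ l : Fin n, (W - cs l • G) * (kk l j • G⁻¹)) + kv j • (1 : Matrix (Fin k) (Fin k) ℝ)
        = β j • 1 := by
    intro j
    have h1 : ∀ l : Fin n, (W - cs l • G) * (kk l j • G⁻¹)
        = kk l j • (W * G⁻¹) - (cs l * kk l j) • (1 : Matrix (Fin k) (Fin k) ℝ) := by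
      intro l
      rw [sub_mul, Matrix.mul_smul, Matrix.smul_mul, Matrix.mul_smul, smul_smul, hGG]
    simp_rw [h1]
    rw [Finset.sum_sub_distrib, ← Finset.sum_smul, ← Finset.sum_smul, hcol j, zero_smul,
      hβ j, sub_smul]
    abel
  have hBM2 :
      (∑ l : Fin n, (W - cs l • G) * (kv l • (1 : Matrix (Fin k) (Fin k) ℝ))) + (ct • G - W)
        = g • G := by
    have h1 : ∀ l : Fin n, (W - cs l • G) * (kv l • (1 : Matrix (Fin k) (Fin k) ℝ))
        = kv l • W - (cs l * kv l) • G := by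
      intro l
      rw [Matrix.mul_smul, mul_one, smul_sub, smul_smul, mul_comm (kv l)]
    simp_rw [h1]
    rw [Finset.sum_sub_distrib, ← Finset.sum_smul, ← Finset.sum_smul, hsum, one_smul,
      hg, sub_smul]
    abel
  -- B * M = R
  have hBMeq : B * M = R := by
    ext a q
    obtain ⟨j, b⟩ := q
    rw [Matrix.mul_apply]
    rw [Fintype.sum_prod_type]
    rw [Fin.sum_univ_castSucc]
    simp only [hB, hM, hR, krigB, krigM, blockMat, Matrix.of_apply]
    by_cases hj : (j : ℕ) < n
    · have key := congrFun (congrFun (hBM1 ⟨j, hj⟩) a) b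
      simp only [Matrix.add_apply, Matrix.sum_apply, Matrix.mul_apply,
        Matrix.smul_apply] at key ⊢
      simpa [Fin.is_lt, Fin.coe_castSucc, Fin.eta, hj, Fin.last, hblk,
        Matrix.one_apply, Matrix.mul_apply, Matrix.smul_apply] using key
    · have key := congrFun (congrFun hBM2 a) b
      simp only [Matrix.add_apply, Matrix.sum_apply, Matrix.mul_apply,
        Matrix.smul_apply, Matrix.sub_apply] at key ⊢
      simpa [Fin.is_lt, Fin.coe_castSucc, Fin.eta, hj, Fin.last, hblk,
        Matrix.one_apply, Matrix.mul_apply, Matrix.smul_apply] using key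
  -- M is symmetric
  have hMsymm : Mᵀ = M := by
    ext p q
    obtain ⟨i, a⟩ := p; obtain ⟨j, b⟩ := q
    simp only [Matrix.transpose_apply, hM, krigM, blockMat, Matrix.of_apply]
    by_cases hi : (i : ℕ) < n <;> by_cases hj : (j : ℕ) < n <;>
      simp only [hi, hj, dif_pos, dif_neg, not_false_iff, Matrix.smul_apply,
        Matrix.sub_apply, Matrix.one_apply]
    · rw [hsym ⟨j, hj⟩ ⟨i, hi⟩, hGiS.apply a b]
    · simp [eq_comm]
    · simp [eq_comm]
    · rw [hG.apply a b, hW.apply a b]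
  -- M * Bᵀ = Rᵀ
  have hMBeq : M * Bᵀ = Rᵀ := by
    calc M * Bᵀ = (B * Mᵀ)ᵀ := by rw [Matrix.transpose_mul, Matrix.transpose_transpose]
    _ = Rᵀ := by rw [hMsymm, hBMeq]
  -- the core product
  have hRXR : Rᵀ * X * R = blockMat (n + 1) k (fun i j => blk i * X * blk j) := by
    ext p q
    obtain ⟨i, a⟩ := p; obtain ⟨j, b⟩ := q
    have hbs : ∀ (i : Fin (n+1)) (a d : Fin k), blk i d a = blk i a d := by
      intro i a d
      simp only [hblk]
      split
      · simp [Matrix.smul_apply, Matrix.one_apply, eq_comm]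
      · simp [Matrix.smul_apply, hG.apply d a]
    simp only [Matrix.mul_apply, Matrix.transpose_apply, hR, Matrix.of_apply, blockMat]
    refine Finset.sum_congr rfl fun c _ => ?_
    congr 1
    refine Finset.sum_congr rfl fun d _ => ?_
    rw [hbs]
  rw [hMBeq, Matrix.mul_assoc (Rᵀ * X) B M, hBMeq, hRXR]
  -- finish blockwise
  ext p q
  obtain ⟨i, a⟩ := p; obtain ⟨j, b⟩ := q
  simp only [Matrix.add_apply, hM, krigM, blockMat, Matrix.of_apply, hblk]
  by_cases hi : (i : ℕ) < n <;> by_cases hj : (j : ℕ) < n <;>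
    simp only [hi, hj, dif_pos, dif_neg, not_false_iff]
  · have : kk ⟨i, hi⟩ ⟨j, hj⟩ • G⁻¹ + β ⟨i, hi⟩ • (1 : Matrix (Fin k) (Fin k) ℝ) * X *
        (β ⟨j, hj⟩ • 1) = (kk ⟨i, hi⟩ ⟨j, hj⟩ + β ⟨i, hi⟩ * β ⟨j, hj⟩ / kstar) • G⁻¹ := by
      rw [hX]
      rw [add_smul]
      congr 1
      simp only [Matrix.smul_mul, Matrix.mul_smul, smul_smul, one_mul, mul_one]
      congr 1
      ring
    exact congrFun (congrFun this a) b
  · have : kv ⟨i, hi⟩ • (1 : Matrix (Fin k) (Fin k) ℝ) + β ⟨i, hi⟩ • (1 : Matrix (Fin k) (Fin k) ℝ) * X *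
        (g • G) = (kv ⟨i, hi⟩ + β ⟨i, hi⟩ * g / kstar) • 1 := by
      rw [hX, add_smul]
      congr 1
      simp only [Matrix.smul_mul, Matrix.mul_smul, smul_smul, one_mul, mul_one, hGG']
      congr 1
      ring
    exact congrFun (congrFun this a) b
  · have : kv ⟨j, hj⟩ • (1 : Matrix (Fin k) (Fin k) ℝ) + g • G * X *
        (β ⟨j, hj⟩ • 1) = (kv ⟨j, hj⟩ + β ⟨j, hj⟩ * g / kstar) • 1 := by
      rw [hX, add_smul]
      congr 1
      simp only [Matrix.smul_mul, Matrix.mul_smul, smul_smul, one_mul, mul_one, hGG]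
      congr 1
      ring
    exact congrFun (congrFun this a) b
  · have : (ct • G - W) + g • G * X * (g • G) = (ct + g ^ 2 / kstar) • G - W := by
      rw [hX, add_smul]
      have h2 : g • G * ((1 / kstar) • G⁻¹) * (g • G)
          = (g ^ 2 / kstar) • G := by
        simp only [Matrix.smul_mul, Matrix.mul_smul, smul_smul]
        rw [mul_assoc G, hGG', mul_one]
        congr 1
        ring
      rw [h2]
      abel
    exact congrFun (congrFun this a) b
end

section
/- Let m ≥ 3 and let c₂, …, c_m, k_{ij} (1 ≤ i,j ≤ m−1), k_i (1 ≤ i ≤ m−1) and c̃ be real constants such that k_{ij} = k_{ji} for all i,j, ∑_{i=1}^{m−1} k_{ij} = 0 for every j, and ∑_{i=1}^{m−1} k_i = 1. Define β_i := k_i − ∑_{l=1}^{m−1} c_{l+1} k_{li}, g := c̃ − ∑_{l=1}^{m−1} c_{l+1} k_l, and suppose k* := 2·∑_{l=1}^{m−1} c_{l+1} k_l − ∑_{l=1}^{m−1} ∑_{j=1}^{m−1} c_{l+1} c_{j+1} k_{lj} − c̃ is nonzero. Define new coefficients, indexed by 1, …, m, as follows: k*_{11} := 1/k*; k*_{1(j+1)}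 := k*_{(j+1)1} := −β_j/k* for 1 ≤ j ≤ m−1; k*_{(i+1)(j+1)} := k_{ij} + β_i β_j / k* for 1 ≤ i,j ≤ m−1; k*_1 := −g/k*; and k*_{i+1} := k_i + β_i g / k* for 1 ≤ i ≤ m−1. Then k*_{ij} = k*_{ji} for all 1 ≤ i,j ≤ m, ∑_{i=1}^{m} k*_{ij} = 0 for every j = 1, …, m, and ∑_{i=1}^{m} k*_i = 1. -/
/-- With m = n+1 (so m ≥ 3 means n ≥ 2) and cs i = c_{i+1}: the new
    coefficients k*_{ij}, k*_i (indexed by Fin (n+1), the index 0 playing the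
    role of the paper's index 1) again satisfy the kriging constraints:
    symmetry, zero column sums, and the k*_i summing to one. -/
theorem stmt8 (n : ℕ) (hn : 2 ≤ n) (cs : Fin n → ℝ)
    (kk : Fin n → Fin n → ℝ) (kv : Fin n → ℝ) (ct : ℝ)
    (hsym : ∀ i j, kk i j = kk j i) (hcol : ∀ j, ∑ i, kk i j = 0)
    (hsum : ∑ i, kv i = 1)
    (β : Fin n → ℝ) (hβ : ∀ i, β i = kv i - ∑ l, cs l * kk l i)
    (g : ℝ) (hg : g = ct - ∑ l, cs l * kv l)
    (kstar : ℝ)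
    (hkstar : kstar = 2 * (∑ l, cs l * kv l) -
      (∑ l, ∑ j, cs l * cs j * kk l j) - ct)
    (hkne : kstar ≠ 0)
    (kk' : Fin (n + 1) → Fin (n + 1) → ℝ)
    (hkk' : kk' = Fin.cons
      (Fin.cons (1 / kstar) fun j => -β j / kstar)
      (fun i => Fin.cons (-β i / kstar)
        fun j => kk i j + β i * β j / kstar))
    (kv' : Fin (n + 1) → ℝ)
    (hkv' : kv' = Fin.cons (-g / kstar) fun i => kv i + β i * g / kstar) :
    (∀ i j, kk' i j = kk' j i) ∧ (∀ j, ∑ i, kk' i j = 0) ∧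
      ∑ i, kv' i = 1 := by
  subst hkk' hkv'
  have hrow : ∀ l, ∑ i, kk l i = 0 := fun l => by
    simp_rw [hsym l]; exact hcol l
  have hβsum : ∑ i, β i = 1 := by
    simp_rw [hβ, Finset.sum_sub_distrib, hsum, Finset.sum_comm (f := fun i l => cs l * kk l i),
      ← Finset.mul_sum, hrow, mul_zero, Finset.sum_const_zero, sub_zero]
  refine ⟨?_, ?_, ?_⟩
  · intro i j
    refine Fin.cases ?_ (fun i => ?_) i <;> refine Fin.cases ?_ (fun j => ?_) j <;>
      simp only [Fin.cons_zero, Fin.cons_succ]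
    rw [hsym]; ring
  · intro j
    refine Fin.cases ?_ (fun j => ?_) j
    · rw [Fin.sum_univ_succ]
      simp only [Fin.cons_zero, Fin.cons_succ, neg_div, Finset.sum_neg_distrib,
        ← Finset.sum_div, hβsum]
      ring
    · rw [Fin.sum_univ_succ]
      simp only [Fin.cons_zero, Fin.cons_succ, Finset.sum_add_distrib, hcol j,
        div_eq_mul_inv, ← Finset.sum_mul, ← Finset.sum_mul, hβsum]
      ring
  · rw [Fin.sum_univ_succ]
    simp only [Fin.cons_zero, Fin.cons_succ, Finset.sum_add_distrib, hsum,
      div_eq_mul_inv, ← Finset.sum_mul, hβsum]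
    ring
end

section
/- Let (T, μ) be a measure space, σ², f : T → ℝ measurable, and B_λ : T → ℝ^K such that t ↦ σ²(t)·B_λ(t)·B_λ(t)ᵀ, t ↦ f(t)·B_λ(t)·B_λ(t)ᵀ, t ↦ σ²(t)·B_λ(t) and t ↦ f(t)·B_λ(t) are Bochner integrable. Define W := ∫_T σ²(t)·B_λ(t)·B_λ(t)ᵀ dμ(t) and G := ∫_T f(t)·B_λ(t)·B_λ(t)ᵀ dμ(t), and assume G is invertible. Let n ≥ 2, let γ_{ij} (1 ≤ i ≠ j ≤ n) be real constants with γ_{ij} = γ_{ji}, and let γ_{01}, …, γ_{0n} be real constants. Let Q := Q(W, G, (γ_{ij}); n), assume Q is invertible with Q^{-1} = M((k_{ij}), (k_i), c̃; n) for coefficients ((k_{ij}), (k_i)) satisfying the kriging constraints, and let c ∈ ℝ^K satisfy cᵀ·B_λ(t) = 1 for μ-almost every t ∈ T. Let J be the K(n+1)-dimensional vector whose i-th block is ∫_T (σ²(t) − γ_{0i}·f(t))·B_λ(t) dμ(t) for i = 1, …, n and whose (n+1)-th block is c. Then the first n block components b₁, …, b_n of Q^{-1}·J satisfy b_i = λ_i·c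 with λ_i := k_i − ∑_{j=1}^{n} k_{ij} γ_{0j} and ∑_{i=1}^{n} λ_i = 1; consequently, for each i, the weight function t ↦ b_iᵀ·B_λ(t) is equal to the constant λ_i for μ-almost every t ∈ T. -/
open Matrix

open MeasureTheory

/-- With W = ∫ σ²(t)·B_λ(t)·B_λ(t)ᵀ dμ and G = ∫ f(t)·B_λ(t)·B_λ(t)ᵀ dμ
    (entrywise integrals), G invertible, Q = Q(W, G, (γ_{ij}); n) invertible
    with inverse M((k_{ij}), (k_i), c̃; n) for coefficients satisfying the
    kriging constraints, cᵀ·B_λ(t) = 1 μ-a.e., and J the block vector whose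
    i-th block is ∫ (σ²(t) − γ_{0i}·f(t))·B_λ(t) dμ for i ≤ n and whose
    (n+1)-th block is c: the first n block components b_i of Q⁻¹·J satisfy
    b_i = λ_i·c with λ_i = k_i − ∑_j k_{ij} γ_{0j}, the λ_i sum to 1, and each
    weight function t ↦ b_iᵀ·B_λ(t) equals λ_i μ-a.e. -/
theorem stmt11 (T : Type*) [MeasurableSpace T] (μ : Measure T) (K : ℕ)
    (hK : 1 ≤ K) (sig f : T → ℝ) (Bl : T → Fin K → ℝ)
    (hsig : Measurable sig) (hf : Measurable f)
    (hint1 : ∀ a b : Fin K, Integrable (fun t => sig t * Bl t a * Bl t b) μ)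
    (hint2 : ∀ a b : Fin K, Integrable (fun t => f t * Bl t a * Bl t b) μ)
    (hint3 : ∀ a : Fin K, Integrable (fun t => sig t * Bl t a) μ)
    (hint4 : ∀ a : Fin K, Integrable (fun t => f t * Bl t a) μ)
    (W G : Matrix (Fin K) (Fin K) ℝ)
    (hWdef : W = Matrix.of fun a b => ∫ t, sig t * Bl t a * Bl t b ∂μ)
    (hGdef : G = Matrix.of fun a b => ∫ t, f t * Bl t a * Bl t b ∂μ)
    (hGinv : IsUnit G)
    (n : ℕ) (hn : 2 ≤ n)
    (γ : Fin n → Fin n → ℝ) (hγ : ∀ i j, γ i j = γ j i)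
    (γ0 : Fin n → ℝ)
    (hQ : IsUnit (krigQ n K W G γ))
    (kk : Fin n → Fin n → ℝ) (kv : Fin n → ℝ) (ct : ℝ)
    (hconstr : krigConstraints n kk kv)
    (hQinv : (krigQ n K W G γ)⁻¹ = krigM n K W G kk kv ct)
    (c : Fin K → ℝ) (hc : ∀ᵐ t ∂μ, ∑ a, c a * Bl t a = 1)
    (J : Fin (n + 1) × Fin K → ℝ)
    (hJ : ∀ p : Fin (n + 1) × Fin K, J p =
      if h : (p.1 : ℕ) < n then
        ∫ t, (sig t - γ0 ⟨p.1, h⟩ * f t) * Bl t p.2 ∂μ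
      else c p.2)
    (lam : Fin n → ℝ) (hlam : ∀ i, lam i = kv i - ∑ j, kk i j * γ0 j) :
    (∀ (i : Fin n) (a : Fin K),
      ((krigQ n K W G γ)⁻¹ *ᵥ J) (i.castSucc, a) = lam i * c a) ∧
    (∑ i, lam i = 1) ∧
    (∀ i : Fin n, ∀ᵐ t ∂μ,
      ∑ a, ((krigQ n K W G γ)⁻¹ *ᵥ J) (i.castSucc, a) * Bl t a = lam i) := by
  obtain ⟨hsym, hcol, hkv⟩ := hconstr
  set g : Fin K → ℝ := fun b => ∫ t, f t * Bl t b ∂μ with hg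
  set w : Fin K → ℝ := fun b => ∫ t, sig t * Bl t b ∂μ with hw
  have hrow : ∀ i, ∑ j, kk i j = 0 := by
    intro i
    rw [Finset.sum_congr rfl fun j _ => hsym i j]
    exact hcol i
  have hGc : G *ᵥ c = g := by
    funext a
    have h1 : ∀ t, f t * Bl t a * (∑ b, c b * Bl t b)
        = ∑ b, c b * (f t * Bl t a * Bl t b) := by
      intro t; rw [Finset.mul_sum]; exact Finset.sum_congr rfl fun b _ => by ring
    have h2 : ∫ t, f t * Bl t a * (∑ b, c b * Bl t b) ∂μ
        = ∑ b, c b * ∫ t, f t * Bl t a * Bl t b ∂μ := by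
      simp_rw [h1]
      rw [integral_finset_sum _ (fun b _ => (hint2 a b).const_mul _)]
      exact Finset.sum_congr rfl fun b _ => integral_const_mul _ _
    have h3 : ∫ t, f t * Bl t a * (∑ b, c b * Bl t b) ∂μ = g a := by
      refine integral_congr_ae ?_
      filter_upwards [hc] with t ht
      rw [ht, mul_one]
    rw [Matrix.mulVec, dotProduct, ← h3, h2]
    simp [hGdef, mul_comm]
  have hGinvg : G⁻¹ *ᵥ g = c := by
    rw [← hGc, Matrix.mulVec_mulVec,
      Matrix.nonsing_inv_mul G ((Matrix.isUnit_iff_isUnit_det G).mp hGinv),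
      Matrix.one_mulVec]
  have hJval : ∀ (j : Fin n) (b : Fin K), J (j.castSucc, b) = w b - γ0 j * g b := by
    intro j b
    rw [hJ]
    have hjlt : (((j.castSucc : Fin (n+1)) : ℕ)) < n := by simp [j.isLt]
    rw [dif_pos hjlt]
    have hjj : (⟨((j.castSucc : Fin (n+1)) : ℕ), hjlt⟩ : Fin n) = j := by
      ext; simp
    simp_rw [hjj, sub_mul, mul_assoc]
    rw [integral_sub (hint3 b) ((hint4 b).const_mul _), integral_const_mul]
  have hb : ∀ (i : Fin n) (a : Fin K),
      ((krigQ n K W G γ)⁻¹ *ᵥ J) (i.castSucc, a) = lam i * c a := by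
    intro i a
    rw [hQinv]
    have hM1 : ∀ (j : Fin n) (b : Fin K),
        krigM n K W G kk kv ct (i.castSucc, a) (j.castSucc, b) = kk i j * G⁻¹ a b := by
      intro j b
      simp [krigM, blockMat, i.isLt, j.isLt]
    have hM2 : ∀ b : Fin K,
        krigM n K W G kk kv ct (i.castSucc, a) (Fin.last n, b)
          = kv i * (1 : Matrix (Fin K) (Fin K) ℝ) a b := by
      intro b
      simp [krigM, blockMat, i.isLt]
    have expand : (krigM n K W G kk kv ct *ᵥ J) (i.castSucc, a)
        = ∑ j : Fin (n+1), ∑ b : Fin K,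
            krigM n K W G kk kv ct (i.castSucc, a) (j, b) * J (j, b) := by
      rw [Matrix.mulVec, dotProduct, Fintype.sum_prod_type]
    rw [expand, Fin.sum_univ_castSucc]
    have hlast : ∑ b, krigM n K W G kk kv ct (i.castSucc, a) (Fin.last n, b)
          * J (Fin.last n, b) = kv i * c a := by
      have hJl : ∀ b : Fin K, J (Fin.last n, b) = c b := by
        intro b; rw [hJ]; simp
      simp_rw [hJl, hM2, Matrix.one_apply]
      simp [mul_ite, ite_mul]
    have hmain : ∑ j : Fin n, ∑ b, krigM n K W G kk kv ct (i.castSucc, a)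
          (j.castSucc, b) * J (j.castSucc, b)
        = - ((∑ j, kk i j * γ0 j) * c a) := by
      have h1 : ∀ j : Fin n, ∑ b, krigM n K W G kk kv ct (i.castSucc, a)
            (j.castSucc, b) * J (j.castSucc, b)
          = kk i j * (∑ b, G⁻¹ a b * w b)
            - kk i j * γ0 j * (∑ b, G⁻¹ a b * g b) := by
        intro j
        simp_rw [hM1, hJval]
        rw [Finset.mul_sum, Finset.mul_sum, ← Finset.sum_sub_distrib]
        exact Finset.sum_congr rfl fun b _ => by ring
      simp_rw [h1]
      rw [Finset.sum_sub_distrib, ← Finset.sum_mul, ← Finset.sum_mul, hrow i,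
        zero_mul, zero_sub]
      have hcc : (∑ b, G⁻¹ a b * g b) = c a := by
        rw [← hGinvg]; rfl
      rw [hcc]
    rw [hmain, hlast, hlam]
    ring
  have hsum : ∑ i, lam i = 1 := by
    simp_rw [hlam]
    rw [Finset.sum_sub_distrib, hkv, Finset.sum_comm]
    have hz : ∀ j : Fin n, ∑ i, kk i j * γ0 j = 0 := by
      intro j; rw [← Finset.sum_mul, hcol j, zero_mul]
    simp [hz]
  refine ⟨hb, hsum, fun i => ?_⟩
  filter_upwards [hc] with t ht
  simp_rw [hb]
  have : (∑ a, lam i * c a * Bl t a) = lam i * ∑ a, c a * Bl t a := by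
    rw [Finset.mul_sum]; exact Finset.sum_congr rfl fun a _ => by ring
  rw [this, ht, mul_one]
end
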